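/- Let G be an abelian group and g ∈ G an element of infinite order. The zero-sum sequence W = (−g)^2 · (−4g)^2 · (2g)^2 · (3g)^2 has exactly three factorizations into atoms: ((−g)(−4g)(2g)(3g))^2, ((−g)^2(2g)) · ((−4g)^2(2g)(3g)^2), and ((−4g)(2g)^2) · ((−g)^2(−4g)(3g)^2); and its catenary degree is c(W) = 2. -/
import Mathlib
set_option maxRecDepth 20000


/-- A minimal zero-sum sequence over the abelian group `G`: a nonempty zero-sum
multiset none of whose proper nonempty sub-multisets has sum zero. -/
def IsMinZeroSum {G : Type*} [AddCommGroup G] (S : Multiset G) : Prop :=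
  S ≠ 0 ∧ S.sum = 0 ∧ ∀ T ≤ S, T ≠ 0 → T.sum = 0 → T = S

/-- A factorization of a zero-sum sequence `B` into atoms of `B(G)`. -/
def IsFactorization {G : Type*} [AddCommGroup G] (B : Multiset G)
    (z : Multiset (Multiset G)) : Prop :=
  (∀ A ∈ z, IsMinZeroSum A) ∧ z.sum = B

/-- The usual distance between two factorizations. -/
noncomputable def factDist {G : Type*} [AddCommGroup G] (z z' : Multiset (Multiset G)) : ℕ :=
  letI := Classical.decEq (Multiset G)
  max (z - z').card (z' - z).card

/-- The catenary degree of `B ∈ B(G)`: the least `N` such that any two factorizations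
of `B` can be concatenated by a chain of factorizations with consecutive distances `≤ N`. -/
noncomputable def catenaryDeg {G : Type*} [AddCommGroup G] (B : Multiset G) : ℕ :=
  sInf {N : ℕ | ∀ z z', IsFactorization B z → IsFactorization B z' →
    Relation.ReflTransGen (fun x y => IsFactorization B y ∧ factDist x y ≤ N) z z'}

/-- The tame degree `t(A, U)` of `A ∈ B(G)` with respect to the atom `U`. -/
noncomputable def tameDeg {G : Type*} [AddCommGroup G] (A U : Multiset G) : ℕ :=
  sInf {N : ℕ | ∀ z, IsFactorization A z →
    (∃ z', IsFactorization A z' ∧ U ∈ z') →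
    ∃ z', IsFactorization A z' ∧ U ∈ z' ∧ factDist z z' ≤ N}

/-- The set of (positive) tame degrees of `B(G)`. -/
noncomputable def TaSet (G : Type*) [AddCommGroup G] : Set ℕ :=
  {n | 0 < n ∧ ∃ A U : Multiset G, A.sum = 0 ∧ IsMinZeroSum U ∧ tameDeg A U = n}

/-- The Davenport constant of `G`: the supremum of lengths of minimal zero-sum sequences. -/
noncomputable def davenport (G : Type*) [AddCommGroup G] : ℕ :=
  sSup {n : ℕ | ∃ A : Multiset G, IsMinZeroSum A ∧ A.card = n}

namespace Stmt8Aux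
open Multiset

def wZ : Multiset ℤ := {-1,-1,-4,-4,2,2,3,3}
def s1 : Multiset ℤ := {-1,-1,2}
def s2 : Multiset ℤ := {-4,2,2}
def s3 : Multiset ℤ := {-1,-4,2,3}
def s4 : Multiset ℤ := {-1,-1,-4,3,3}
def s5 : Multiset ℤ := {-4,-4,2,3,3}

def MinZ (S : Multiset ℤ) : Prop :=
  S ≠ 0 ∧ S.sum = 0 ∧ ∀ T ∈ S.powerset, T ≠ 0 → T.sum = 0 → T = S

instance : DecidablePred MinZ := fun S => by unfold MinZ; infer_instance

theorem minZ_iff (S : Multiset ℤ) : IsMinZeroSum S ↔ MinZ S := by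
  unfold IsMinZeroSum MinZ
  simp only [mem_powerset]

theorem factA : ∀ a ∈ wZ.powerset, a ≠ 0 → a.sum = 0 →
    a = s1 ∨ a = s2 ∨ a = s3 ∨ a = s4 ∨ a = s5 ∨ a = wZ := by decide

theorem factB : MinZ s1 ∧ MinZ s2 ∧ MinZ s3 ∧ MinZ s4 ∧ MinZ s5 ∧ ¬ MinZ wZ := by decide

theorem factC : ∀ a ∈ [s1,s2,s3,s4,s5], ∀ b ∈ [s1,s2,s3,s4,s5], a + b = wZ →
    (a = s3 ∧ b = s3) ∨ (a = s1 ∧ b = s5) ∨ (a = s5 ∧ b = s1) ∨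
    (a = s2 ∧ b = s4) ∨ (a = s4 ∧ b = s2) := by decide

theorem factD : s3 + s3 = wZ ∧ s1 + s5 = wZ ∧ s2 + s4 = wZ := by decide

theorem lift_le {α β : Type*} [Nonempty α] {f : α → β} (hf : Function.Injective f)
    {s : Multiset α} {T : Multiset β} (h : T ≤ Multiset.map f s) :
    ∃ t, t ≤ s ∧ T = Multiset.map f t := by
  have hψ : ∀ a, Function.invFun f (f a) = a := Function.leftInverse_invFun hf
  refine ⟨T.map (Function.invFun f), ?_, ?_⟩
  · have h2 := Multiset.map_le_map (f := Function.invFun f) h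
    rwa [Multiset.map_map, show (Function.invFun f ∘ f) = id from funext hψ,
      Multiset.map_id] at h2
  · rw [Multiset.map_map]
    have : Multiset.map (f ∘ Function.invFun f) T = Multiset.map id T := by
      refine Multiset.map_congr rfl ?_
      intro x hx
      obtain ⟨a, _, rfl⟩ := Multiset.mem_map.1 (Multiset.mem_of_le h hx)
      simp [hψ]
    rw [this, Multiset.map_id]

theorem lift_mem {α β : Type*} [Nonempty α] {f : α → β} (hf : Function.Injective f)
    {z : Multiset (Multiset β)} (h : ∀ A ∈ z, ∃ a, A = Multiset.map f a) :
    ∃ ζ, z = Multiset.map (Multiset.map f) ζ := by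
  have hψ : ∀ a, Function.invFun f (f a) = a := Function.leftInverse_invFun hf
  refine ⟨z.map (Multiset.map (Function.invFun f)), ?_⟩
  rw [Multiset.map_map]
  have : ∀ A ∈ z, (Multiset.map f ∘ Multiset.map (Function.invFun f)) A = id A := by
    intro A hA; obtain ⟨a, rfl⟩ := h A hA
    simp [Multiset.map_map, Function.comp_def, hψ]
  rw [Multiset.map_congr rfl this, Multiset.map_id]

variable {G : Type*} [AddCommGroup G]

theorem minIff (f : ℤ →+ G) (hf : Function.Injective f) (t : Multiset ℤ) :
    IsMinZeroSum (Multiset.map f t) ↔ IsMinZeroSum t := by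
  have hsum : ∀ u : Multiset ℤ, (Multiset.map f u).sum = f u.sum :=
    fun u => (map_multiset_sum f u).symm
  have hz : ∀ x : ℤ, f x = 0 ↔ x = 0 := fun x => map_eq_zero_iff f hf
  constructor
  · rintro ⟨h1, h2, h3⟩
    refine ⟨by simpa using h1, by rw [hsum, hz] at h2; exact h2, ?_⟩
    intro u hu hu0 hus
    have := h3 (Multiset.map f u) (Multiset.map_le_map hu) (by simpa using hu0)
      (by rw [hsum, hz, hus])
    exact Multiset.map_injective hf this
  · rintro ⟨h1, h2, h3⟩
    refine ⟨by simpa using h1, by rw [hsum, hz]; exact h2, ?_⟩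
    intro T hT hT0 hTs
    obtain ⟨u, hu, rfl⟩ := lift_le hf hT
    rw [h3 u hu (by simpa using hT0) (by rw [hsum, hz] at hTs; exact hTs)]

theorem factIff (f : ℤ →+ G) (hf : Function.Injective f) (B : Multiset ℤ) (ζ : Multiset (Multiset ℤ)) :
    IsFactorization (Multiset.map f B) (Multiset.map (Multiset.map f) ζ) ↔
      ((∀ a ∈ ζ, IsMinZeroSum a) ∧ ζ.sum = B) := by
  unfold IsFactorization
  have hsum : (Multiset.map (Multiset.map f) ζ).sum = Multiset.map f ζ.sum := by
    have := map_multiset_sum (Multiset.mapAddMonoidHom f) ζ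
    simpa [Multiset.coe_mapAddMonoidHom] using this.symm
  constructor
  · rintro ⟨h1, h2⟩
    refine ⟨fun a ha => (minIff f hf a).1 (h1 _ (Multiset.mem_map_of_mem _ ha)), ?_⟩
    rw [hsum] at h2
    exact Multiset.map_injective hf h2
  · rintro ⟨h1, h2⟩
    refine ⟨?_, by rw [hsum, h2]⟩
    intro A hA
    obtain ⟨a, ha, rfl⟩ := Multiset.mem_map.1 hA
    exact (minIff f hf a).2 (h1 a ha)


theorem keyZ (ζ : Multiset (Multiset ℤ)) (hatom : ∀ a ∈ ζ, IsMinZeroSum a)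
    (hsum : ζ.sum = wZ) : ζ = {s3, s3} ∨ ζ = {s1, s5} ∨ ζ = {s2, s4} := by
  have hmemL : ∀ a ∈ ζ, a = s1 ∨ a = s2 ∨ a = s3 ∨ a = s4 ∨ a = s5 := by
    intro a ha
    have hle : a ≤ wZ := by
      obtain ⟨r, hr⟩ := exists_cons_of_mem ha
      rw [← hsum, hr, Multiset.sum_cons]
      exact le_add_right a r.sum
    obtain ⟨h0, hs0, -⟩ := (minZ_iff a).1 (hatom a ha)
    have := factA a (mem_powerset.2 hle) h0 hs0
    rcases this with h|h|h|h|h|h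
    · exact Or.inl h
    · exact Or.inr (Or.inl h)
    · exact Or.inr (Or.inr (Or.inl h))
    · exact Or.inr (Or.inr (Or.inr (Or.inl h)))
    · exact Or.inr (Or.inr (Or.inr (Or.inr h)))
    · exact absurd ((minZ_iff a).1 (hatom a ha)) (by rw [h]; exact factB.2.2.2.2.2)
  have hcard3 : ∀ a ∈ ζ, 3 ≤ Multiset.card a := by
    intro a ha
    rcases hmemL a ha with rfl|rfl|rfl|rfl|rfl <;> decide
  have h8 : (ζ.map Multiset.card).sum = 8 := by
    have := Multiset.card_join ζ
    rw [show ζ.join = ζ.sum from rfl, hsum] at this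
    rw [← this]; decide
  have hle2 : Multiset.card ζ ≤ 2 := by
    by_contra hgt
    push_neg at hgt
    have h3 : Multiset.card (ζ.map Multiset.card) • 3 ≤ (ζ.map Multiset.card).sum :=
      Multiset.card_nsmul_le_sum (by
        intro x hx
        obtain ⟨a, ha, rfl⟩ := Multiset.mem_map.1 hx
        exact hcard3 a ha)
    rw [Multiset.card_map, h8, smul_eq_mul] at h3
    omega
  interval_cases h : Multiset.card ζ
  · rw [Multiset.card_eq_zero] at h
    subst h
    simp only [Multiset.sum_zero] at hsum
    exact absurd hsum.symm (by decide)
  · obtain ⟨a, rfl⟩ := Multiset.card_eq_one.1 h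
    rw [Multiset.sum_singleton] at hsum
    subst hsum
    have := hmemL _ (Multiset.mem_singleton_self _)
    revert this; decide
  · obtain ⟨a, b, rfl⟩ := Multiset.card_eq_two.1 h
    have hab : a + b = wZ := by
      rw [← hsum]
      simp [Multiset.insert_eq_cons, Multiset.sum_cons]
    have ha : a ∈ [s1,s2,s3,s4,s5] := by simpa using hmemL a (by simp)
    have hb : b ∈ [s1,s2,s3,s4,s5] := by simpa using hmemL b (by simp [Multiset.insert_eq_cons])
    rcases factC a ha b hb hab with ⟨rfl,rfl⟩|⟨rfl,rfl⟩|⟨rfl,rfl⟩|⟨rfl,rfl⟩|⟨rfl,rfl⟩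
    · exact Or.inl rfl
    · exact Or.inr (Or.inl rfl)
    · exact Or.inr (Or.inl (by decide))
    · exact Or.inr (Or.inr rfl)
    · exact Or.inr (Or.inr (by decide))

end Stmt8Aux


theorem stmt8 (G : Type*) [AddCommGroup G] (g : G) (hg : addOrderOf g = 0) :
    (∀ z, IsFactorization
        (Multiset.replicate 2 (-g) + Multiset.replicate 2 (-(4 • g)) +
          Multiset.replicate 2 (2 • g) + Multiset.replicate 2 (3 • g)) z ↔
      z = Multiset.replicate 2 ({-g, -(4 • g), 2 • g, 3 • g} : Multiset G) ∨
      z = ({({-g, -g, 2 • g} : Multiset G),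
            ({-(4 • g), -(4 • g), 2 • g, 3 • g, 3 • g} : Multiset G)} :
              Multiset (Multiset G)) ∨
      z = ({({-(4 • g), 2 • g, 2 • g} : Multiset G),
            ({-g, -g, -(4 • g), 3 • g, 3 • g} : Multiset G)} :
              Multiset (Multiset G))) ∧
    catenaryDeg
      (Multiset.replicate 2 (-g) + Multiset.replicate 2 (-(4 • g)) +
        Multiset.replicate 2 (2 • g) + Multiset.replicate 2 (3 • g)) = 2 := by
  open Multiset Stmt8Aux in
  have hzero : ∀ n : ℤ, n • g = 0 ↔ n = 0 := by
    intro n; rw [← addOrderOf_dvd_iff_zsmul_eq_zero, hg]; simp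
  have hφ : ∀ n : ℤ, (zmultiplesHom G g) n = n • g := fun n => rfl
  have hinj : Function.Injective (zmultiplesHom G g) := by
    intro m n h
    rw [hφ, hφ] at h
    have h2 : (m - n) • g = 0 := by simp [sub_zsmul, h]
    have := (hzero _).1 h2
    omega
  have e1 : ((-1:ℤ)) • g = -g := by rw [neg_zsmul, one_zsmul]
  have e2 : ((2:ℤ)) • g = (2:ℕ) • g := by
    rw [show ((2:ℤ)) = ((2:ℕ):ℤ) by norm_num, natCast_zsmul]
  have e3 : ((3:ℤ)) • g = (3:ℕ) • g := by
    rw [show ((3:ℤ)) = ((3:ℕ):ℤ) by norm_num, natCast_zsmul]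
  have e4 : ((-4:ℤ)) • g = -((4:ℕ) • g) := by
    rw [show ((-4:ℤ)) = -((4:ℕ):ℤ) by norm_num, neg_zsmul, natCast_zsmul]
  set φ : ℤ →+ G := zmultiplesHom G g with hφdef
  set A1g : Multiset G := {-g, -g, 2 • g} with hA1def
  set A2g : Multiset G := {-(4 • g), 2 • g, 2 • g} with hA2def
  set A3g : Multiset G := {-g, -(4 • g), 2 • g, 3 • g} with hA3def
  set A4g : Multiset G := {-g, -g, -(4 • g), 3 • g, 3 • g} with hA4def
  set A5g : Multiset G := {-(4 • g), -(4 • g), 2 • g, 3 • g, 3 • g} with hA5def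
  have hA1 : Multiset.map φ s1 = A1g := by
    simp [hA1def, s1, Multiset.insert_eq_cons, hφ, e1, e2]
  have hA2 : Multiset.map φ s2 = A2g := by
    simp [hA2def, s2, Multiset.insert_eq_cons, hφ, e2, e4]
  have hA3 : Multiset.map φ s3 = A3g := by
    simp [hA3def, s3, Multiset.insert_eq_cons, hφ, e1, e2, e3, e4]
  have hA4 : Multiset.map φ s4 = A4g := by
    simp [hA4def, s4, Multiset.insert_eq_cons, hφ, e1, e3, e4]
  have hA5 : Multiset.map φ s5 = A5g := by
    simp [hA5def, s5, Multiset.insert_eq_cons, hφ, e2, e3, e4]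
  set Bg : Multiset G := Multiset.replicate 2 (-g) + Multiset.replicate 2 (-(4 • g)) +
      Multiset.replicate 2 (2 • g) + Multiset.replicate 2 (3 • g) with hBdef
  have hW : Bg = Multiset.map φ wZ := by
    have hrhs : Multiset.map φ wZ = (-g) ::ₘ (-g) ::ₘ -((4:ℕ) • g) ::ₘ -((4:ℕ) • g) ::ₘ
        ((2:ℕ) • g) ::ₘ ((2:ℕ) • g) ::ₘ ((3:ℕ) • g) ::ₘ {(3:ℕ) • g} := by
      simp [wZ, Multiset.insert_eq_cons, hφ, e1, e2, e3, e4]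
    rw [hBdef, hrhs]
    rfl
  set z1g : Multiset (Multiset G) := Multiset.replicate 2 A3g with hz1def
  set z2g : Multiset (Multiset G) := {A1g, A5g} with hz2def
  set z3g : Multiset (Multiset G) := {A2g, A4g} with hz3def
  have hz1 : Multiset.map (Multiset.map φ) ({s3, s3} : Multiset (Multiset ℤ)) = z1g := by
    simp [hz1def, Multiset.insert_eq_cons, hA3, Multiset.replicate_succ]
  have hz2 : Multiset.map (Multiset.map φ) ({s1, s5} : Multiset (Multiset ℤ)) = z2g := by
    simp [hz2def, Multiset.insert_eq_cons, hA1, hA5]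
  have hz3 : Multiset.map (Multiset.map φ) ({s2, s4} : Multiset (Multiset ℤ)) = z3g := by
    simp [hz3def, Multiset.insert_eq_cons, hA2, hA4]
  have part1 : ∀ z, IsFactorization Bg z ↔ z = z1g ∨ z = z2g ∨ z = z3g := by
    intro z
    constructor
    · intro hz
      have hsub : ∀ A ∈ z, ∃ a, A = Multiset.map φ a := by
        intro A hA
        have hle : A ≤ Multiset.map φ wZ := by
          rw [← hW, ← hz.2]
          obtain ⟨r, hr⟩ := Multiset.exists_cons_of_mem hA
          rw [hr, Multiset.sum_cons]
          exact le_add_right _ _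
        obtain ⟨a, -, ha⟩ := lift_le hinj hle
        exact ⟨a, ha⟩
      obtain ⟨ζ, rfl⟩ := lift_mem hinj hsub
      rw [hW, factIff φ hinj] at hz
      rcases keyZ ζ hz.1 hz.2 with rfl | rfl | rfl
      · exact Or.inl hz1
      · exact Or.inr (Or.inl hz2)
      · exact Or.inr (Or.inr hz3)
    · rintro (rfl | rfl | rfl)
      · rw [hW, ← hz1]
        refine (factIff φ hinj wZ _).2 ⟨?_, by decide⟩
        intro a ha
        rw [Multiset.insert_eq_cons, Multiset.mem_cons, Multiset.mem_singleton] at ha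
        rcases ha with rfl | rfl <;> exact (minZ_iff _).2 factB.2.2.1
      · rw [hW, ← hz2]
        refine (factIff φ hinj wZ _).2 ⟨?_, by decide⟩
        intro a ha
        rw [Multiset.insert_eq_cons, Multiset.mem_cons, Multiset.mem_singleton] at ha
        rcases ha with rfl | rfl
        · exact (minZ_iff _).2 factB.1
        · exact (minZ_iff _).2 factB.2.2.2.2.1
      · rw [hW, ← hz3]
        refine (factIff φ hinj wZ _).2 ⟨?_, by decide⟩
        intro a ha
        rw [Multiset.insert_eq_cons, Multiset.mem_cons, Multiset.mem_singleton] at ha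
        rcases ha with rfl | rfl
        · exact (minZ_iff _).2 factB.2.1
        · exact (minZ_iff _).2 factB.2.2.2.1
  refine ⟨part1, ?_⟩
  letI instD : DecidableEq (Multiset G) := Classical.decEq (Multiset G)
  have hfd : ∀ z z' : Multiset (Multiset G),
      factDist z z' = max (Multiset.card (z - z')) (Multiset.card (z' - z)) := fun _ _ => rfl
  have hinj2 : Function.Injective (Multiset.map (Multiset.map φ)) :=
    Multiset.map_injective (Multiset.map_injective hinj)
  have hne : A1g ≠ A3g ∧ A5g ≠ A3g ∧ A2g ≠ A3g ∧ A4g ≠ A3g := by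
    refine ⟨?_, ?_, ?_, ?_⟩
    · rw [← hA1, ← hA3]; intro h
      exact absurd (Multiset.map_injective hinj h) (by decide)
    · rw [← hA5, ← hA3]; intro h
      exact absurd (Multiset.map_injective hinj h) (by decide)
    · rw [← hA2, ← hA3]; intro h
      exact absurd (Multiset.map_injective hinj h) (by decide)
    · rw [← hA4, ← hA3]; intro h
      exact absurd (Multiset.map_injective hinj h) (by decide)
  have hnm : ∀ x ∈ z2g + z3g, x ∉ z1g := by
    intro x hx
    rw [hz1def, Multiset.mem_replicate]
    rintro ⟨-, rfl⟩
    rw [hz2def, hz3def] at hx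
    simp only [Multiset.mem_add, Multiset.insert_eq_cons, Multiset.mem_cons,
      Multiset.mem_singleton] at hx
    rcases hx with (h|h)|(h|h)
    · exact hne.1 h.symm
    · exact hne.2.1 h.symm
    · exact hne.2.2.1 h.symm
    · exact hne.2.2.2 h.symm
  have hsub12 : z1g - z2g = z1g := by
    rw [show z2g = A1g ::ₘ A5g ::ₘ 0 from rfl, Multiset.sub_cons, Multiset.sub_cons,
      Multiset.sub_zero, Multiset.erase_of_notMem (hnm A1g (by simp [hz2def])),
      Multiset.erase_of_notMem (hnm A5g (by simp [hz2def, Multiset.insert_eq_cons]))]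
  have hsub13 : z1g - z3g = z1g := by
    rw [show z3g = A2g ::ₘ A4g ::ₘ 0 from rfl, Multiset.sub_cons, Multiset.sub_cons,
      Multiset.sub_zero, Multiset.erase_of_notMem (hnm A2g (by simp [hz3def])),
      Multiset.erase_of_notMem (hnm A4g (by simp [hz3def, Multiset.insert_eq_cons]))]
  have hcard1 : Multiset.card z1g = 2 := by rw [hz1def, Multiset.card_replicate]
  have hd12 : 2 ≤ factDist z1g z2g := by
    rw [hfd]
    exact le_trans (by rw [hsub12, hcard1]) (le_max_left _ _)
  have hd13 : 2 ≤ factDist z1g z3g := by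
    rw [hfd]
    exact le_trans (by rw [hsub13, hcard1]) (le_max_left _ _)
  have hne12 : z1g ≠ z2g := by
    rw [← hz1, ← hz2]; intro h
    exact absurd (hinj2 h) (by decide)
  have f1 : IsFactorization Bg z1g := (part1 _).2 (Or.inl rfl)
  have f2 : IsFactorization Bg z2g := (part1 _).2 (Or.inr (Or.inl rfl))
  have h2mem : ∀ z z', IsFactorization Bg z → IsFactorization Bg z' →
      Relation.ReflTransGen (fun x y => IsFactorization Bg y ∧ factDist x y ≤ 2) z z' := by
    intro z z' hz hz'
    have hcz : ∀ u, IsFactorization Bg u → Multiset.card u = 2 := by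
      intro u hu
      rcases (part1 u).1 hu with rfl | rfl | rfl
      · exact hcard1
      · rw [hz2def]; rfl
      · rw [hz3def]; rfl
    refine Relation.ReflTransGen.single ⟨hz', ?_⟩
    rw [hfd]
    refine max_le ?_ ?_
    · exact le_trans (Multiset.card_le_card tsub_le_self) (hcz z hz).le
    · exact le_trans (Multiset.card_le_card tsub_le_self) (hcz z' hz').le
  have hlb : ∀ N ∈ {N : ℕ | ∀ z z', IsFactorization Bg z → IsFactorization Bg z' →
      Relation.ReflTransGen (fun x y => IsFactorization Bg y ∧ factDist x y ≤ N) z z'},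
      2 ≤ N := by
    intro N hN
    by_contra hlt
    push_neg at hlt
    have hchain := hN _ _ f1 f2
    have hreach : ∀ y, Relation.ReflTransGen
        (fun x y => IsFactorization Bg y ∧ factDist x y ≤ N) z1g y → y = z1g := by
      intro y hy
      induction hy with
      | refl => rfl
      | tail hab hbc ih =>
        rw [ih] at hbc
        obtain ⟨hyf, hyd⟩ := hbc
        rcases (part1 _).1 hyf with rfl | rfl | rfl
        · rfl
        · omega
        · omega
    exact hne12 (hreach _ hchain).symm
  show sInf _ = 2
  refine le_antisymm (Nat.sInf_le (h2mem : _ ∈ _)) (le_csInf ⟨2, h2mem⟩ hlb)
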